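/- For a random walk (W_i) starting at 0 with i.i.d. increments distributed as ξ−1 where ξ has distribution μ, and a forest f_k of k i.i.d. Galton–Watson trees with offspring distribution μ, for any k ≥ 1 and n ≥ k one has P(|f_k| = n) = (k/n) P(W_n = −k). -/
import Mathlib


open scoped ENNReal

inductive PlaneTree : Type
  | node : List PlaneTree → PlaneTree

namespace PlaneTree

mutual
def size : PlaneTree → ℕ
  | .node ts => 1 + sizeL ts
def sizeL : List PlaneTree → ℕ
  | [] => 0
  | t :: ts => size t + sizeL ts
end

mutual
/-- The Galton–Watson weight of a finite plane tree: the product over all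
vertices `u` of `μ (number of children of u)`. -/
noncomputable def weight (μ : ℕ → ℝ≥0∞) : PlaneTree → ℝ≥0∞
  | .node ts => μ ts.length * weightL μ ts
noncomputable def weightL (μ : ℕ → ℝ≥0∞) : List PlaneTree → ℝ≥0∞
  | [] => 1
  | t :: ts => weight μ t * weightL μ ts
end

end PlaneTree

/-- `P(|f_k| = n)`: probability that a forest of `k` i.i.d. Galton–Watson trees with
offspring distribution `μ` has total size `n`. -/
noncomputable def forestProb (μ : ℕ → ℝ≥0∞) (k n : ℕ) : ℝ≥0∞ :=
  ∑' f : Fin k → PlaneTree,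
    if (∑ i : Fin k, (f i).size) = n then ∏ i : Fin k, (f i).weight μ else 0

/-- `P(W_n = x)` for the left-continuous random walk with `n` i.i.d. steps distributed
as `ξ - 1`, `ξ ~ μ`, started at `0`. -/
noncomputable def walkProb (μ : ℕ → ℝ≥0∞) (n : ℕ) (x : ℤ) : ℝ≥0∞ :=
  ∑' ξ : Fin n → ℕ,
    if (∑ i : Fin n, ((ξ i : ℤ) - 1)) = x then ∏ i : Fin n, μ (ξ i) else 0

namespace OtterAux

open PlaneTree

lemma one_le_size (t : PlaneTree) : 1 ≤ t.size := by
  cases t; simp [PlaneTree.size]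

lemma sizeL_ofFn : ∀ {j : ℕ} (g : Fin j → PlaneTree),
    sizeL (List.ofFn g) = ∑ i, (g i).size := by
  intro j
  induction j with
  | zero => intro g; simp [List.ofFn_zero, PlaneTree.sizeL]
  | succ m ih =>
    intro g
    rw [List.ofFn_succ]
    simp only [PlaneTree.sizeL, ih, Fin.sum_univ_succ]

lemma weightL_ofFn (μ : ℕ → ℝ≥0∞) : ∀ {j : ℕ} (g : Fin j → PlaneTree),
    weightL μ (List.ofFn g) = ∏ i, (g i).weight μ := by
  intro j
  induction j with
  | zero => intro g; simp [List.ofFn_zero, PlaneTree.weightL]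
  | succ m ih =>
    intro g
    rw [List.ofFn_succ]
    simp only [PlaneTree.weightL, ih, Fin.prod_univ_succ]

/-- `PlaneTree ≃ List PlaneTree`. -/
def nodeEquiv : List PlaneTree ≃ PlaneTree where
  toFun := PlaneTree.node
  invFun := fun t => match t with | .node ts => ts
  left_inv := fun l => rfl
  right_inv := fun t => match t with | .node ts => rfl

/-- Appending tuples. -/
def appendEquiv (α : Type*) (m k : ℕ) : (Fin m → α) × (Fin k → α) ≃ (Fin (m + k) → α) where
  toFun := fun p => Fin.append p.1 p.2
  invFun := fun F => (F ∘ Fin.castAdd k, F ∘ Fin.natAdd m)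
  left_inv := by
    rintro ⟨g, h⟩
    refine Prod.ext (funext fun i => ?_) (funext fun i => ?_)
    · exact Fin.append_left g h i
    · exact Fin.append_right g h i
  right_inv := by
    intro F
    funext i
    induction i using Fin.addCases with
    | left i => exact Fin.append_left _ _ i
    | right i => exact Fin.append_right _ _ i

end OtterAux

section Part2
open OtterAux PlaneTree

variable (μ : ℕ → ℝ≥0∞)

lemma forestProb_of_lt {k n : ℕ} (h : n < k) : forestProb μ k n = 0 := by
  rw [forestProb, ENNReal.tsum_eq_zero]
  intro f
  rw [if_neg]
  intro hs
  have hk : k ≤ ∑ i : Fin k, (f i).size := by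
    have := Finset.card_nsmul_le_sum Finset.univ (fun i => (f i).size) 1
      (fun i _ => one_le_size (f i))
    simpa using this
  omega

lemma forestProb_zero_left (n : ℕ) : forestProb μ 0 n = if n = 0 then 1 else 0 := by
  rw [forestProb, tsum_eq_single (default : Fin 0 → PlaneTree)
    (fun b hb => absurd (Subsingleton.elim b default) hb)]
  simp [eq_comm]

lemma walkProb_zero (x : ℤ) : walkProb μ 0 x = if x = 0 then 1 else 0 := by
  rw [walkProb, tsum_eq_single (default : Fin 0 → ℕ)
    (fun b hb => absurd (Subsingleton.elim b default) hb)]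
  simp [eq_comm]

lemma walkProb_of_lt {k n : ℕ} (h : n < k) : walkProb μ n (-(k : ℤ)) = 0 := by
  rw [walkProb, ENNReal.tsum_eq_zero]
  intro ξ
  rw [if_neg]
  intro hs
  have h1 : (-(n:ℤ)) ≤ ∑ i : Fin n, ((ξ i : ℤ) - 1) := by
    calc (-(n:ℤ)) = ∑ _i : Fin n, (-1 : ℤ) := by simp
    _ ≤ _ := Finset.sum_le_sum (fun i _ => by omega)
  omega

end Part2

section Part3
open OtterAux PlaneTree

variable (μ : ℕ → ℝ≥0∞)

lemma walkProb_succ (n : ℕ) (x : ℤ) :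
    walkProb μ (n + 1) x = ∑' j : ℕ, μ j * walkProb μ n (x - ((j : ℤ) - 1)) := by
  rw [walkProb, ← Equiv.tsum_eq (Fin.consEquiv (fun _ : Fin (n+1) => ℕ))]
  rw [ENNReal.tsum_prod']
  refine tsum_congr fun j => ?_
  rw [walkProb, ← ENNReal.tsum_mul_left]
  refine tsum_congr fun η => ?_
  have h1 : (∑ i : Fin (n+1), (((Fin.cons j η : Fin (n+1) → ℕ) i : ℤ) - 1))
      = ((j:ℤ)-1) + ∑ i : Fin n, ((η i : ℤ) - 1) := by
    rw [Fin.sum_univ_succ]; simp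
  have h2 : (∏ i : Fin (n+1), μ ((Fin.cons j η : Fin (n+1) → ℕ) i))
      = μ j * ∏ i : Fin n, μ (η i) := by
    rw [Fin.prod_univ_succ]; simp
  simp only [Fin.consEquiv_apply, h1, h2]
  have hiff : ((j:ℤ)-1) + ∑ i : Fin n, ((η i : ℤ) - 1) = x ↔
      (∑ i : Fin n, ((η i : ℤ) - 1)) = x - ((j:ℤ)-1) := by omega
  rw [mul_ite, mul_zero, if_congr hiff rfl rfl]

/-- The weighted sum `E[ξ₀ · 1{W_{n+1} = x}]`. -/
noncomputable def wA (μ : ℕ → ℝ≥0∞) (n : ℕ) (x : ℤ) : ℝ≥0∞ :=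
  ∑' ξ : Fin (n+1) → ℕ,
    if (∑ i : Fin (n+1), ((ξ i : ℤ) - 1)) = x then (ξ 0 : ℝ≥0∞) * ∏ i, μ (ξ i) else 0

lemma wA_succ (n : ℕ) (x : ℤ) :
    wA μ n x = ∑' j : ℕ, (j : ℝ≥0∞) * (μ j * walkProb μ n (x - ((j : ℤ) - 1))) := by
  rw [wA, ← Equiv.tsum_eq (Fin.consEquiv (fun _ : Fin (n+1) => ℕ))]
  rw [ENNReal.tsum_prod']
  refine tsum_congr fun j => ?_
  rw [walkProb, ← ENNReal.tsum_mul_left, ← ENNReal.tsum_mul_left]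
  refine tsum_congr fun η => ?_
  have h1 : (∑ i : Fin (n+1), (((Fin.cons j η : Fin (n+1) → ℕ) i : ℤ) - 1))
      = ((j:ℤ)-1) + ∑ i : Fin n, ((η i : ℤ) - 1) := by
    rw [Fin.sum_univ_succ]; simp
  have h2 : (∏ i : Fin (n+1), μ ((Fin.cons j η : Fin (n+1) → ℕ) i))
      = μ j * ∏ i : Fin n, μ (η i) := by
    rw [Fin.prod_univ_succ]; simp
  simp only [Fin.consEquiv_apply, h1, h2, Fin.cons_zero]
  have hiff : ((j:ℤ)-1) + ∑ i : Fin n, ((η i : ℤ) - 1) = x ↔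
      (∑ i : Fin n, ((η i : ℤ) - 1)) = x - ((j:ℤ)-1) := by omega
  rw [if_congr hiff rfl rfl, mul_ite, mul_ite, mul_zero, mul_zero]

lemma exch (n k : ℕ) (hk : k ≤ n + 1) :
    ((n + 1 : ℕ) : ℝ≥0∞) * wA μ n (-(k : ℤ)) =
      ((n + 1 - k : ℕ) : ℝ≥0∞) * walkProb μ (n+1) (-(k : ℤ)) := by
  set F : Fin (n+1) → (Fin (n+1) → ℕ) → ℝ≥0∞ := fun i ξ =>
    if (∑ t : Fin (n+1), ((ξ t : ℤ) - 1)) = -(k : ℤ) then (ξ i : ℝ≥0∞) * ∏ t, μ (ξ t) else 0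
    with hF
  have claim1 : ∀ i : Fin (n+1), ∑' ξ, F i ξ = wA μ n (-(k : ℤ)) := by
    intro i
    rw [wA, ← Equiv.tsum_eq (Equiv.arrowCongr (Equiv.swap (0 : Fin (n+1)) i) (Equiv.refl ℕ)) (F i)]
    refine tsum_congr fun ξ => ?_
    have happ : ∀ t, (Equiv.arrowCongr (Equiv.swap (0 : Fin (n+1)) i) (Equiv.refl ℕ)) ξ t
        = ξ (Equiv.swap (0 : Fin (n+1)) i t) := by
      intro t; simp [Equiv.arrowCongr, Equiv.symm_apply_eq, Equiv.swap_apply_def]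
    rw [hF]
    simp only [happ]
    rw [Equiv.sum_comp (Equiv.swap (0 : Fin (n+1)) i) (fun t => ((ξ t : ℤ) - 1)),
      Equiv.prod_comp (Equiv.swap (0 : Fin (n+1)) i) (fun t => μ (ξ t)),
      Equiv.swap_apply_right]
  have claim2 : ∑ i : Fin (n+1), ∑' ξ, F i ξ
      = ((n + 1 - k : ℕ) : ℝ≥0∞) * walkProb μ (n+1) (-(k : ℤ)) := by
    rw [← Summable.tsum_finsetSum (fun i _ => ENNReal.summable)]
    rw [walkProb, ← ENNReal.tsum_mul_left]
    refine tsum_congr fun ξ => ?_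
    by_cases hc : (∑ t : Fin (n+1), ((ξ t : ℤ) - 1)) = -(k : ℤ)
    · simp only [hF, if_pos hc]
      rw [← Finset.sum_mul]
      congr 1
      have hd : (∑ t : Fin (n+1), ((ξ t : ℤ) - 1))
          = (∑ t : Fin (n+1), (ξ t : ℤ)) - (n+1) := by
        rw [Finset.sum_sub_distrib]; simp
      rw [hd] at hc
      have hcast : ((∑ t : Fin (n+1), ξ t : ℕ) : ℤ) = ∑ t : Fin (n+1), (ξ t : ℤ) :=
        Nat.cast_sum _ _
      have hsum' : (∑ t : Fin (n+1), ξ t) = n + 1 - k := by omega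
      rw [← Nat.cast_sum, hsum']
    · simp only [hF, if_neg hc, Finset.sum_const_zero, mul_zero]
  have lhs : ∑ i : Fin (n+1), ∑' ξ, F i ξ = ((n + 1 : ℕ) : ℝ≥0∞) * wA μ n (-(k : ℤ)) := by
    rw [Finset.sum_congr rfl (fun i _ => claim1 i)]
    simp [mul_comm]
  rw [← lhs, claim2]

end Part3

section Part4
open OtterAux PlaneTree

variable (μ : ℕ → ℝ≥0∞)

@[simp] lemma nodeEquiv_apply (ts : List PlaneTree) : nodeEquiv ts = PlaneTree.node ts := rfl

@[simp] lemma equivSigmaTuple_symm_apply {α : Type*} (j : ℕ) (g : Fin j → α) :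
    List.equivSigmaTuple.symm ⟨j, g⟩ = List.ofFn g := rfl

lemma forest_succ (k n : ℕ) :
    forestProb μ (k+1) (n+1) = ∑' j : ℕ, μ j * forestProb μ (j+k) n := by
  have hforest : ∀ j : ℕ, forestProb μ (j+k) n
      = ∑' (g' : Fin j → PlaneTree), ∑' (g : Fin k → PlaneTree),
          if (∑ i, (g' i).size) + (∑ i, (g i).size) = n
          then (∏ i, (g' i).weight μ) * ∏ i, (g i).weight μ else 0 := by
    intro j
    rw [forestProb, ← Equiv.tsum_eq (appendEquiv PlaneTree j k), ENNReal.tsum_prod']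
    refine tsum_congr fun g' => tsum_congr fun g => ?_
    have hs : (∑ i : Fin (j+k), ((Fin.append g' g) i).size)
        = (∑ i, (g' i).size) + ∑ i, (g i).size := by
      rw [Fin.sum_univ_add]
      simp [Fin.append_left, Fin.append_right]
    have hw : (∏ i : Fin (j+k), ((Fin.append g' g) i).weight μ)
        = (∏ i, (g' i).weight μ) * ∏ i, (g i).weight μ := by
      rw [Fin.prod_univ_add]
      simp [Fin.append_left, Fin.append_right]
    show (if (∑ i : Fin (j+k), ((Fin.append g' g) i).size) = n
        then ∏ i : Fin (j+k), ((Fin.append g' g) i).weight μ else 0) = _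
    rw [hs, hw]
  rw [forestProb, ← Equiv.tsum_eq (Fin.consEquiv (fun _ : Fin (k+1) => PlaneTree)),
    ENNReal.tsum_prod', ← Equiv.tsum_eq nodeEquiv,
    ← Equiv.tsum_eq (List.equivSigmaTuple (α := PlaneTree)).symm, ENNReal.tsum_sigma']
  refine tsum_congr fun j => ?_
  rw [hforest j, ← ENNReal.tsum_mul_left]
  refine tsum_congr fun g' => ?_
  rw [← ENNReal.tsum_mul_left]
  refine tsum_congr fun g => ?_
  have hs : (∑ i : Fin (k+1),
      ((Fin.cons (PlaneTree.node (List.ofFn g')) g : Fin (k+1) → PlaneTree) i).size)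
      = (1 + ∑ i, (g' i).size) + ∑ i, (g i).size := by
    rw [Fin.sum_univ_succ]
    simp only [Fin.cons_zero, Fin.cons_succ, PlaneTree.size, sizeL_ofFn]
    try ring
  have hw : (∏ i : Fin (k+1),
      ((Fin.cons (PlaneTree.node (List.ofFn g')) g : Fin (k+1) → PlaneTree) i).weight μ)
      = μ j * ((∏ i, (g' i).weight μ) * ∏ i, (g i).weight μ) := by
    rw [Fin.prod_univ_succ]
    simp only [Fin.cons_zero, Fin.cons_succ, PlaneTree.weight, weightL_ofFn, List.length_ofFn]
    try ring
  simp only [Fin.consEquiv_apply, equivSigmaTuple_symm_apply, nodeEquiv_apply, hs, hw]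
  have hiff : (1 + ∑ i, (g' i).size) + (∑ i, (g i).size) = n + 1 ↔
      (∑ i, (g' i).size) + (∑ i, (g i).size) = n := by omega
  rw [if_congr hiff rfl rfl, mul_ite, mul_zero]

end Part4


section Part5
open OtterAux PlaneTree

variable (μ : ℕ → ℝ≥0∞)

lemma cancel_aux {c x y : ℝ≥0∞} (hc0 : c ≠ 0) (hct : c ≠ ⊤) (h : c * x = c * y) : x = y := by
  have h2 := congrArg (fun z => c⁻¹ * z) h
  simpa [← mul_assoc, ENNReal.inv_mul_cancel hc0 hct, one_mul] using h2

lemma main_lemma (n : ℕ) : ∀ k : ℕ, 1 ≤ k →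
    forestProb μ k n = ((k : ℝ≥0∞) / n) * walkProb μ n (-(k : ℤ)) := by
  induction n with
  | zero =>
    intro k hk
    rw [forestProb_of_lt μ hk, walkProb_of_lt μ hk, mul_zero]
  | succ n ih =>
    intro k hk
    by_cases hkn : k ≤ n + 1
    · obtain ⟨k', rfl⟩ : ∃ k', k = k' + 1 := ⟨k - 1, by omega⟩
      have harg : ∀ j : ℕ, (-((k' + 1 : ℕ) : ℤ) - ((j : ℤ) - 1)) = -((j + k' : ℕ) : ℤ) := by
        intro j; push_cast; ring
      rcases Nat.eq_zero_or_pos n with rfl | hn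
      · -- total length 1, forces k' = 0
        have hk0 : k' = 0 := by omega
        subst hk0
        rw [forest_succ, walkProb_succ]
        have hL : (∑' j : ℕ, μ j * forestProb μ (j + 0) 0) = μ 0 := by
          rw [tsum_eq_single 0 (fun j hj => ?_)]
          · rw [forestProb_zero_left]; simp
          · rw [forestProb_of_lt μ (by omega), mul_zero]
        have hR : (∑' j : ℕ, μ j * walkProb μ 0 (-((0 + 1 : ℕ) : ℤ) - ((j : ℤ) - 1))) = μ 0 := by
          rw [tsum_eq_single 0 (fun j hj => ?_)]
          · rw [walkProb_zero]; norm_num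
          · rw [walkProb_zero, if_neg (by push_cast; omega), mul_zero]
        rw [hL, hR]
        norm_num
      · -- n ≥ 1
        have hC0 : ((n : ℕ) : ℝ≥0∞) ≠ 0 := Nat.cast_ne_zero.mpr (by omega)
        have hCt : ((n : ℕ) : ℝ≥0∞) ≠ ⊤ := ENNReal.natCast_ne_top n
        have hD0 : ((n + 1 : ℕ) : ℝ≥0∞) ≠ 0 := Nat.cast_ne_zero.mpr (by omega)
        have hDt : ((n + 1 : ℕ) : ℝ≥0∞) ≠ ⊤ := ENNReal.natCast_ne_top _
        set p : ℕ → ℝ≥0∞ := fun j => walkProb μ n (-((j + k' : ℕ) : ℤ)) with hp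
        set P : ℝ≥0∞ := ∑' j : ℕ, μ j * p j with hPdef
        set A : ℝ≥0∞ := ∑' j : ℕ, (j : ℝ≥0∞) * (μ j * p j) with hAdef
        have hP : walkProb μ (n + 1) (-((k' + 1 : ℕ) : ℤ)) = P := by
          rw [walkProb_succ]
          exact tsum_congr fun j => by rw [harg j]
        have hwA : wA μ n (-((k' + 1 : ℕ) : ℤ)) = A := by
          rw [wA_succ]
          exact tsum_congr fun j => by rw [harg j]
        have hA : ((n + 1 : ℕ) : ℝ≥0∞) * A = ((n - k' : ℕ) : ℝ≥0∞) * P := by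
          rw [← hwA, ← hP]
          have := exch μ n (k' + 1) hkn
          simpa [Nat.succ_sub_succ] using this
        have step1 : forestProb μ (k' + 1) (n + 1)
            = ∑' j : ℕ, μ j * (((j + k' : ℕ) : ℝ≥0∞) / (n : ℝ≥0∞) * p j) := by
          rw [forest_succ]
          refine tsum_congr fun j => ?_
          rcases Nat.eq_zero_or_pos (j + k') with hz | hpos
          · rw [hz, forestProb_zero_left, if_neg (by omega)]
            simp
          · rw [ih (j + k') hpos, hp]
        rw [step1, hP]
        refine cancel_aux (c := ((n : ℕ) : ℝ≥0∞) * ((n + 1 : ℕ) : ℝ≥0∞))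
          (by exact mul_ne_zero hC0 hD0) (ENNReal.mul_ne_top hCt hDt) ?_
        have hCinv : ((n : ℕ) : ℝ≥0∞) * ((n : ℕ) : ℝ≥0∞)⁻¹ = 1 :=
          ENNReal.mul_inv_cancel hC0 hCt
        have hDinv : ((n + 1 : ℕ) : ℝ≥0∞) * ((n + 1 : ℕ) : ℝ≥0∞)⁻¹ = 1 :=
          ENNReal.mul_inv_cancel hD0 hDt
        have lhs_eq : (((n : ℕ) : ℝ≥0∞) * ((n + 1 : ℕ) : ℝ≥0∞)) *
            (∑' j : ℕ, μ j * (((j + k' : ℕ) : ℝ≥0∞) / (n : ℝ≥0∞) * p j))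
            = ((n + 1 : ℕ) : ℝ≥0∞) * A + ((n + 1 : ℕ) : ℝ≥0∞) * ((k' : ℝ≥0∞) * P) := by
          rw [← ENNReal.tsum_mul_left]
          have hterm : ∀ j : ℕ, (((n : ℕ) : ℝ≥0∞) * ((n + 1 : ℕ) : ℝ≥0∞)) *
              (μ j * (((j + k' : ℕ) : ℝ≥0∞) / (n : ℝ≥0∞) * p j))
              = ((n + 1 : ℕ) : ℝ≥0∞) * ((j : ℝ≥0∞) * (μ j * p j))
                + ((n + 1 : ℕ) : ℝ≥0∞) * ((k' : ℝ≥0∞) * (μ j * p j)) := by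
            intro j
            calc (((n : ℕ) : ℝ≥0∞) * ((n + 1 : ℕ) : ℝ≥0∞)) *
                (μ j * (((j + k' : ℕ) : ℝ≥0∞) / (n : ℝ≥0∞) * p j))
                = (((n : ℕ) : ℝ≥0∞) * ((n : ℕ) : ℝ≥0∞)⁻¹) *
                  (((n + 1 : ℕ) : ℝ≥0∞) * ((j : ℝ≥0∞) * (μ j * p j))
                    + ((n + 1 : ℕ) : ℝ≥0∞) * ((k' : ℝ≥0∞) * (μ j * p j))) := by
                  push_cast [div_eq_mul_inv]; ring
              _ = (((n + 1 : ℕ) : ℝ≥0∞) * ((j : ℝ≥0∞) * (μ j * p j))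
                    + ((n + 1 : ℕ) : ℝ≥0∞) * ((k' : ℝ≥0∞) * (μ j * p j))) := by
                  rw [hCinv, one_mul]
              _ = _ := by push_cast; ring
          rw [tsum_congr hterm, ENNReal.tsum_add]
          congr 1
          · rw [ENNReal.tsum_mul_left]
          · rw [ENNReal.tsum_mul_left, ENNReal.tsum_mul_left]
        rw [lhs_eq, hA]
        have hnat : ((n - k' : ℕ) : ℝ≥0∞) * P + ((n + 1 : ℕ) : ℝ≥0∞) * ((k' : ℝ≥0∞) * P)
            = ((n * (k' + 1) : ℕ) : ℝ≥0∞) * P := by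
          have h1 : (n - k') + (n + 1) * k' = n * (k' + 1) := by
            have : k' ≤ n := by omega
            cases Nat.le.dest this with
            | intro c hc => subst hc; ring_nf; omega
          rw [← h1]
          push_cast [Nat.cast_sub (by omega : k' ≤ n)]
          ring
        rw [hnat]
        symm
        calc (((n : ℕ) : ℝ≥0∞) * ((n + 1 : ℕ) : ℝ≥0∞)) *
            (((k' + 1 : ℕ) : ℝ≥0∞) / ((n + 1 : ℕ) : ℝ≥0∞) * P)
            = (((n + 1 : ℕ) : ℝ≥0∞) * ((n + 1 : ℕ) : ℝ≥0∞)⁻¹) *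
              (((n : ℕ) : ℝ≥0∞) * ((k' + 1 : ℕ) : ℝ≥0∞) * P) := by
              rw [div_eq_mul_inv]; ring
          _ = ((n * (k' + 1) : ℕ) : ℝ≥0∞) * P := by
              rw [hDinv, one_mul]; push_cast; ring
    · rw [forestProb_of_lt μ (by omega), walkProb_of_lt μ (by omega), mul_zero]

end Part5


/-- **Otter / Dvoretzky–Motzkin cyclic lemma.**  For a probability distribution `μ` on `ℕ`,
a forest of `k` i.i.d. Galton–Watson(μ) trees, and the random walk `W` with i.i.d. steps
`ξ - 1`, `ξ ~ μ`: for `1 ≤ k ≤ n`, `P(|f_k| = n) = (k / n) * P(W_n = -k)`. -/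
theorem otter_cyclic_lemma (μ : ℕ → ℝ≥0∞) (hμ : ∑' k, μ k = 1)
    (k n : ℕ) (hk : 1 ≤ k) (hkn : k ≤ n) :
    forestProb μ k n = ((k : ℝ≥0∞) / n) * walkProb μ n (-(k : ℤ)) :=
  main_lemma μ n k hk
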